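/- arXiv:2303.05673 — 4 statements merged into one kernel-verified Lean document; each statement's English description precedes it below -/
import Mathlib

section
/- Let G be a finite robustly rooted multigraph with root S. Then for every basis B of a cofinite inescapable subspace of the unfolding tree T(G, S), the set of termini T[B] = {T(b) : b ∈ B} contains a root of G. -/
/-- A directed multigraph: vertices, edges, origin and terminus maps. -/
structure Multigraph where
  V : Type
  E : Type
  o : E → V
  t : E → V

namespace Multigraph

/-- Graph homomorphism. -/
structure Hom (G H : Multigraph) where
  onV : G.V → H.V
  onE : G.E → H.E
  map_o : ∀ e, H.o (onE e) = onV (G.o e)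
  map_t : ∀ e, H.t (onE e) = onV (G.t e)

/-- Graph isomorphism. -/
structure Iso (G H : Multigraph) extends Hom G H where
  bijV : Function.Bijective onV
  bijE : Function.Bijective onE

/-- Rooted isomorphism of rooted multigraphs. -/
def RootedIso (G : Multigraph) (S : G.V) (H : Multigraph) (R : H.V) : Prop :=
  ∃ φ : Iso G H, φ.onV S = R

/-- Outgoing edge neighbourhood of a vertex. -/
def Eo (G : Multigraph) (v : G.V) : Set G.E := {e | G.o e = v}

/-- Incoming edge neighbourhood of a vertex. -/
def Et (G : Multigraph) (v : G.V) : Set G.E := {e | G.t e = v}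

/-- A graph equivalence relation: compatible equivalences on vertices and edges. -/
structure GraphEquiv (G : Multigraph) where
  rV : G.V → G.V → Prop
  rE : G.E → G.E → Prop
  equivV : Equivalence rV
  equivE : Equivalence rE
  compat_o : ∀ e f, rE e f → rV (G.o e) (G.o f)
  compat_t : ∀ e f, rE e f → rV (G.t e) (G.t f)

/-- Non-edge-collapsing graph equivalence relation. -/
def GraphEquiv.NonEdgeCollapsing {G : Multigraph} (s : GraphEquiv G) : Prop :=
  ∀ v v', s.rV v v' → ∀ e, G.o e = v → ∃! e', G.o e' = v' ∧ s.rE e e'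

/-- Quotient graph by a graph equivalence relation. -/
def GraphEquiv.quot {G : Multigraph} (s : GraphEquiv G) : Multigraph where
  V := Quot s.rV
  E := Quot s.rE
  o := Quot.lift (fun e => Quot.mk s.rV (G.o e)) (fun e f h => Quot.sound (s.compat_o e f h))
  t := Quot.lift (fun e => Quot.mk s.rV (G.t e)) (fun e f h => Quot.sound (s.compat_t e f h))

/-- A graph is non-redundant if its only non-edge-collapsing equivalence relation is trivial. -/
def NonRedundant (G : Multigraph) : Prop :=
  ∀ s : GraphEquiv G, s.NonEdgeCollapsing →
    (∀ v w, s.rV v w → v = w) ∧ (∀ e f, s.rE e f → e = f)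

/-- Directed walks in `G` starting at `S`, indexed by the terminus. -/
inductive Walk (G : Multigraph) (S : G.V) : G.V → Type
  | nil : Walk G S S
  | snoc {v : G.V} (w : Walk G S v) (e : G.E) (h : G.o e = v) : Walk G S (G.t e)

/-- Length of a walk. -/
def Walk.length {G : Multigraph} {S : G.V} : ∀ {v : G.V}, Walk G S v → ℕ
  | _, .nil => 0
  | _, .snoc w _ _ => w.length + 1

/-- Reachability by a directed walk. -/
def Reaches (G : Multigraph) (x y : G.V) : Prop := Nonempty (Walk G x y)

/-- `S` is a root: every vertex is reachable from `S`. -/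
def IsRoot (G : Multigraph) (S : G.V) : Prop := ∀ v, Reaches G S v

/-- No two edges share a terminus. -/
def NoClashes (G : Multigraph) : Prop := ∀ e f : G.E, G.t e = G.t f → e = f

/-- No non-empty closed walks. -/
def Acyclic (G : Multigraph) : Prop := ∀ v : G.V, ∀ w : Walk G v v, w.length = 0

/-- The outgoing subgraph `G_x`: induced on the vertices reachable from `x`. -/
def outGraph (G : Multigraph) (x : G.V) : Multigraph where
  V := {y : G.V // Reaches G x y}
  E := {e : G.E // Reaches G x (G.o e)}
  o := fun e => ⟨G.o e.1, e.2⟩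
  t := fun e => ⟨G.t e.1, e.2.elim fun w => ⟨w.snoc e.1 rfl⟩⟩

/-- The natural root of `G_x`. -/
def rootOut (G : Multigraph) (x : G.V) : (outGraph G x).V := ⟨x, ⟨Walk.nil⟩⟩

/-- o-equivalence of vertices: rooted isomorphism of their outgoing graphs. -/
def OEquiv (G : Multigraph) (v w : G.V) : Prop :=
  RootedIso (outGraph G v) (rootOut G v) (outGraph G w) (rootOut G w)

/-- Walks starting at `S` (with arbitrary terminus). -/
abbrev WalkFrom (G : Multigraph) (S : G.V) : Type := Σ v : G.V, Walk G S v

/-- Terminus of a walk. -/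
def term {G : Multigraph} {S : G.V} (w : WalkFrom G S) : G.V := w.1

/-- The unfolding tree `T(G, S)`: vertices are walks from `S`, edges are one-step extensions. -/
def unfoldTree (G : Multigraph) (S : G.V) : Multigraph where
  V := WalkFrom G S
  E := Σ v : G.V, Walk G S v × {e : G.E // G.o e = v}
  o := fun x => ⟨x.1, x.2.1⟩
  t := fun x => ⟨G.t x.2.2.1, x.2.1.snoc x.2.2.1 x.2.2.2⟩

/-- The empty walk at `S`, root of the unfolding tree. -/
def nilWalk (G : Multigraph) (S : G.V) : WalkFrom G S := ⟨S, Walk.nil⟩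

/-- Prefix order on walks from `S`. -/
inductive IsPrefix (G : Multigraph) (S : G.V) : WalkFrom G S → WalkFrom G S → Prop
  | refl (w : WalkFrom G S) : IsPrefix G S w w
  | snoc {w : WalkFrom G S} {v : G.V} (u : Walk G S v) (e : G.E) (h : G.o e = v) :
      IsPrefix G S w ⟨v, u⟩ → IsPrefix G S w ⟨G.t e, u.snoc e h⟩

/-- The half-tree of the unfolding tree rooted at the walk `w`. -/
def halfTree (G : Multigraph) (S : G.V) (w : WalkFrom G S) : Multigraph where
  V := {u : WalkFrom G S // IsPrefix G S w u}
  E := {x : Σ v : G.V, Walk G S v × {e : G.E // G.o e = v} // IsPrefix G S w ⟨x.1, x.2.1⟩}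
  o := fun x => ⟨⟨x.1.1, x.1.2.1⟩, x.2⟩
  t := fun x => ⟨⟨G.t x.1.2.2.1, x.1.2.1.snoc x.1.2.2.1 x.1.2.2.2⟩,
    IsPrefix.snoc x.1.2.1 x.1.2.2.1 x.1.2.2.2 x.2⟩

/-- A subspace of the unfolding tree: a set of walks closed under extension. -/
def IsSubspace (G : Multigraph) (S : G.V) (𝒮 : Set (WalkFrom G S)) : Prop :=
  ∀ w ∈ 𝒮, ∀ w', IsPrefix G S w w' → w' ∈ 𝒮

/-- An inescapable subspace: every walk extends into it. -/
def Inescapable (G : Multigraph) (S : G.V) (𝒮 : Set (WalkFrom G S)) : Prop :=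
  ∀ w : WalkFrom G S, ∃ u ∈ 𝒮, IsPrefix G S w u

/-- A cofinite subspace: a finite union of half-trees. -/
def CofiniteSubspace (G : Multigraph) (S : G.V) (𝒮 : Set (WalkFrom G S)) : Prop :=
  ∃ F : Set (WalkFrom G S), F.Finite ∧ 𝒮 = {u | ∃ x ∈ F, IsPrefix G S x u}

/-- `B` is a basis of the subspace `𝒮`: a prefix-antichain in `𝒮` such that every
walk in `𝒮` has a prefix in `B`. -/
def IsBasis (G : Multigraph) (S : G.V) (𝒮 B : Set (WalkFrom G S)) : Prop :=
  B ⊆ 𝒮 ∧ (∀ b ∈ B, ∀ b' ∈ B, IsPrefix G S b b' → b = b') ∧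
    ∀ w ∈ 𝒮, ∃ b ∈ B, IsPrefix G S b w

/-- Deleting a set of edges from a graph (also removing vertices all of whose
incident edges are deleted). -/
def deleteEdges (G : Multigraph) (F : Set G.E) : Multigraph where
  V := {v : G.V // ¬((∃ e, G.o e = v ∨ G.t e = v) ∧ ∀ e, (G.o e = v ∨ G.t e = v) → e ∈ F)}
  E := {e : G.E // e ∉ F}
  o := fun e => ⟨G.o e.1, fun h => e.2 (h.2 e.1 (Or.inl rfl))⟩
  t := fun e => ⟨G.t e.1, fun h => e.2 (h.2 e.1 (Or.inr rfl))⟩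

/-- Two trees are almost isomorphic: after removing finite subtrees (given by their
finite edge sets), the remainders are isomorphic. -/
def AlmostIso (T1 T2 : Multigraph) : Prop :=
  ∃ F1 : Set T1.E, F1.Finite ∧ ∃ F2 : Set T2.E, F2.Finite ∧
    Nonempty (Iso (deleteEdges T1 F1) (deleteEdges T2 F2))

open scoped Classical in
/-- The multiset of termini of the outgoing edges of `v`. -/
noncomputable def outSum (G : Multigraph) [Fintype G.E] (v : G.V) : Multiset G.V :=
  ∑ e ∈ Finset.univ.filter (fun e => G.o e = v), ({G.t e} : Multiset G.V)

/-- The defining relations of the graph monoid: `v = Σ_{e ∈ E_o(v)} t(e)` for non-sinks. -/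
def monoidRel (G : Multigraph) [Fintype G.E] : Multiset G.V → Multiset G.V → Prop :=
  fun s u => ∃ v : G.V, (∃ e, G.o e = v) ∧ s = {v} ∧ u = outSum G v

/-- Equality in the graph monoid `M(G)`: the additive congruence generated by the
graph relations on the free commutative monoid `Multiset G.V`. -/
def monoidEq (G : Multigraph) [Fintype G.E] (s u : Multiset G.V) : Prop :=
  addConGen (monoidRel G) s u

/-- A robustly rooted graph: it has a root, and every root has an out-neighbour that
is again a root. -/
def RobustlyRooted (G : Multigraph) : Prop :=
  (∃ S, IsRoot G S) ∧ ∀ v, IsRoot G v → ∃ e, G.o e = v ∧ IsRoot G (G.t e)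

/-- The two-vertex multigraph with adjacency matrix `(A B; C D)`;
`false` is the vertex `x`, `true` is the vertex `y`. -/
def twoVertexGraph (A B C D : ℕ) : Multigraph where
  V := Bool
  E := (Fin A ⊕ Fin B) ⊕ (Fin C ⊕ Fin D)
  o := fun e => match e with | .inl _ => false | .inr _ => true
  t := fun e => match e with
    | .inl (.inl _) => false
    | .inl (.inr _) => true
    | .inr (.inl _) => false
    | .inr (.inr _) => true

instance (A B C D : ℕ) : Fintype (twoVertexGraph A B C D).E :=
  inferInstanceAs (Fintype ((Fin A ⊕ Fin B) ⊕ (Fin C ⊕ Fin D)))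

end Multigraph

open Multigraph

namespace Multigraph

variable {G : Multigraph} {S : G.V}

/-- Length of a walk-from. -/
def wlen (w : WalkFrom G S) : ℕ := w.2.length

/-- The last step of a nonempty walk, extracted non-dependently. -/
def initE : WalkFrom G S → Option (WalkFrom G S × G.E)
  | ⟨_, .nil⟩ => none
  | ⟨_, Walk.snoc (v := v) u e _⟩ => some (⟨v, u⟩, e)

lemma prefix_len {a b : WalkFrom G S} (h : IsPrefix G S a b) : wlen a ≤ wlen b := by
  induction h with
  | refl => exact le_refl _
  | snoc u e h hp ih => exact Nat.le_succ_of_le ih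

lemma prefix_eq_of_len {a b : WalkFrom G S} (h : IsPrefix G S a b)
    (hl : wlen b ≤ wlen a) : a = b := by
  cases h with
  | refl => rfl
  | snoc u e h hp =>
    have h1 : wlen a ≤ wlen (⟨_, u⟩ : WalkFrom G S) := prefix_len hp
    have h2 : wlen (⟨_, u.snoc e h⟩ : WalkFrom G S) = wlen (⟨_, u⟩ : WalkFrom G S) + 1 := rfl
    omega

lemma prefix_inv {b w : WalkFrom G S} (hp : IsPrefix G S b w) :
    ∀ {v : G.V} {u : Walk G S v} {e : G.E} {h : G.o e = v},
      w = ⟨G.t e, u.snoc e h⟩ → b = w ∨ IsPrefix G S b ⟨v, u⟩ := by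
  cases hp with
  | refl => intro _ _ _ _ _; exact Or.inl rfl
  | snoc u' e' h' hp' =>
    intro v u e h heq
    have h2 := congrArg initE heq
    rw [show initE (⟨_, u'.snoc e' h'⟩ : WalkFrom G S) = some (⟨_, u'⟩, e') from rfl,
        show initE (⟨_, u.snoc e h⟩ : WalkFrom G S) = some (⟨_, u⟩, e) from rfl,
        Option.some_inj] at h2
    have h3 : (⟨_, u'⟩ : WalkFrom G S) = ⟨v, u⟩ := congrArg Prod.fst h2
    exact Or.inr (h3 ▸ hp')

lemma prefix_comp {a u : WalkFrom G S} (ha : IsPrefix G S a u) :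
    ∀ {b : WalkFrom G S}, IsPrefix G S b u →
      IsPrefix G S a b ∨ IsPrefix G S b a := by
  induction ha with
  | refl => intro b hb; exact Or.inr hb
  | snoc u' e h hp ih =>
    intro b hb
    rcases prefix_inv hb rfl with hb' | hb'
    · subst hb'; exact Or.inl (IsPrefix.snoc _ _ _ hp)
    · exact ih hb'

/-- A walk built by iterating a root-preserving step from `S`. -/
noncomputable def rootChain (G : Multigraph) (S : G.V) (hS : IsRoot G S)
    (e : ∀ v, IsRoot G v → G.E) (heo : ∀ v h, G.o (e v h) = v)
    (hrt : ∀ v h, IsRoot G (G.t (e v h))) :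
    ℕ → {p : WalkFrom G S // IsRoot G p.1}
  | 0 => ⟨⟨S, .nil⟩, hS⟩
  | n + 1 =>
    let p := rootChain G S hS e heo hrt n
    ⟨⟨G.t (e p.1.1 p.2), p.1.2.snoc (e p.1.1 p.2) (heo p.1.1 p.2)⟩, hrt _ _⟩

lemma rootChain_len (hS : IsRoot G S)
    (e : ∀ v, IsRoot G v → G.E) (heo : ∀ v h, G.o (e v h) = v)
    (hrt : ∀ v h, IsRoot G (G.t (e v h))) :
    ∀ n, wlen (rootChain G S hS e heo hrt n).1 = n
  | 0 => rfl
  | n + 1 => by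
    have := rootChain_len hS e heo hrt n
    simp only [rootChain, wlen, Walk.length] at this ⊢
    omega

lemma rootChain_prefix_root (hS : IsRoot G S)
    (e : ∀ v, IsRoot G v → G.E) (heo : ∀ v h, G.o (e v h) = v)
    (hrt : ∀ v h, IsRoot G (G.t (e v h))) :
    ∀ n (b : WalkFrom G S), IsPrefix G S b (rootChain G S hS e heo hrt n).1 →
      IsRoot G b.1
  | 0, b, hb => by
    have hb0 : b = (rootChain G S hS e heo hrt 0).1 :=
      prefix_eq_of_len hb (Nat.zero_le _)
    rw [hb0]
    exact (rootChain G S hS e heo hrt 0).2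
  | n + 1, b, hb => by
    rcases prefix_inv hb rfl with h | h
    · rw [h]; exact (rootChain G S hS e heo hrt (n + 1)).2
    · exact rootChain_prefix_root hS e heo hrt n b h

end Multigraph

/-- In a finite robustly rooted graph, the set of termini of any basis of a
cofinite inescapable subspace of the unfolding tree contains a root. -/
theorem statement12 (G : Multigraph) [Fintype G.V] [Fintype G.E]
    (hrob : RobustlyRooted G) (S : G.V) (hS : IsRoot G S)
    (𝒮 B : Set (WalkFrom G S)) (hsub : IsSubspace G S 𝒮)
    (hin : Inescapable G S 𝒮) (hcof : CofiniteSubspace G S 𝒮)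
    (hB : IsBasis G S 𝒮 B) :
    ∃ b ∈ B, IsRoot G (term b) := by
  obtain ⟨-, hstep⟩ := hrob
  choose e heo hrt using hstep
  obtain ⟨F, hF, h𝒮⟩ := hcof
  set N := hF.toFinset.sup (fun x => wlen x) with hN
  set w := (rootChain G S hS e heo hrt N).1 with hw
  have hwlen : wlen w = N := rootChain_len hS e heo hrt N
  obtain ⟨u, hu𝒮, hwu⟩ := hin w
  rw [h𝒮] at hu𝒮
  obtain ⟨x, hxF, hxu⟩ := hu𝒮
  have hw𝒮 : w ∈ 𝒮 := by
    rcases prefix_comp hwu hxu with hwx | hxw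
    · have hxle : wlen x ≤ N := by
        rw [hN]
        exact Finset.le_sup (f := fun x => wlen x) (hF.mem_toFinset.mpr hxF)
      have : w = x := prefix_eq_of_len hwx (hwlen ▸ hxle)
      rw [h𝒮]
      exact ⟨x, hxF, this ▸ IsPrefix.refl x⟩
    · rw [h𝒮]
      exact ⟨x, hxF, hxw⟩
  obtain ⟨b, hbB, hbw⟩ := hB.2.2 w hw𝒮
  exact ⟨b, hbB, rootChain_prefix_root hS e heo hrt N b hbw⟩
end

section
/- Let G, H be finite non-redundant robustly rooted multigraphs with roots S_G, S_H respectively. If the unfolding trees T(G, S_G) and T(H, S_H) are almost isomorphic, then G and H are isomorphic as graphs. -/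
namespace Multigraph
section Dev
open Classical

noncomputable section

/-- identity isomorphism -/
def Iso.refl (G : Multigraph) : Iso G G :=
  ⟨⟨id, id, fun _ => rfl, fun _ => rfl⟩, Function.bijective_id, Function.bijective_id⟩

def Iso.comp {G H K : Multigraph} (φ : Iso G H) (ψ : Iso H K) : Iso G K :=
  ⟨⟨ψ.onV ∘ φ.onV, ψ.onE ∘ φ.onE,
    fun e => by simp [ψ.map_o, φ.map_o],
    fun e => by simp [ψ.map_t, φ.map_t]⟩,
   ψ.bijV.comp φ.bijV, ψ.bijE.comp φ.bijE⟩

/-- the vertex equiv of an iso -/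
noncomputable def Iso.eV {G H : Multigraph} (φ : Iso G H) : G.V ≃ H.V :=
  Equiv.ofBijective φ.onV φ.bijV

noncomputable def Iso.eE {G H : Multigraph} (φ : Iso G H) : G.E ≃ H.E :=
  Equiv.ofBijective φ.onE φ.bijE

noncomputable def Iso.symm {G H : Multigraph} (φ : Iso G H) : Iso H G :=
  ⟨⟨φ.eV.symm, φ.eE.symm,
    fun f => φ.eV.injective (by
      show φ.onV _ = φ.onV _
      rw [← φ.map_o]
      show _ = (φ.eV) (φ.eV.symm (H.o f))
      rw [Equiv.apply_symm_apply]
      congr 1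
      show (φ.eE) (φ.eE.symm f) = f
      exact Equiv.apply_symm_apply _ _),
    fun f => φ.eV.injective (by
      show φ.onV _ = φ.onV _
      rw [← φ.map_t]
      show _ = (φ.eV) (φ.eV.symm (H.t f))
      rw [Equiv.apply_symm_apply]
      congr 1
      show (φ.eE) (φ.eE.symm f) = f
      exact Equiv.apply_symm_apply _ _)⟩,
   φ.eV.symm.bijective, φ.eE.symm.bijective⟩

@[simp] lemma Iso.symm_onE_onE {G H : Multigraph} (φ : Iso G H) (e : G.E) :
    (Iso.symm φ).onE (φ.onE e) = e := φ.eE.symm_apply_apply e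

@[simp] lemma Iso.onE_symm_onE {G H : Multigraph} (φ : Iso G H) (f : H.E) :
    φ.onE ((Iso.symm φ).onE f) = f := φ.eE.apply_symm_apply f

@[simp] lemma Iso.symm_onV_onV {G H : Multigraph} (φ : Iso G H) (v : G.V) :
    (Iso.symm φ).onV (φ.onV v) = v := φ.eV.symm_apply_apply v

lemma RootedIso.rfl {G : Multigraph} (S : G.V) : RootedIso G S G S := ⟨Iso.refl G, Eq.refl S⟩

lemma RootedIso.symm {G H : Multigraph} {S : G.V} {R : H.V} (h : RootedIso G S H R) :
    RootedIso H R G S := by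
  obtain ⟨φ, hφ⟩ := h
  exact ⟨Iso.symm φ, by rw [← hφ]; exact φ.eV.symm_apply_apply S⟩

lemma RootedIso.trans {G H K : Multigraph} {S : G.V} {R : H.V} {Q : K.V}
    (h1 : RootedIso G S H R) (h2 : RootedIso H R K Q) : RootedIso G S K Q := by
  obtain ⟨φ, hφ⟩ := h1; obtain ⟨ψ, hψ⟩ := h2
  exact ⟨Iso.comp φ ψ, by show ψ.onV (φ.onV S) = Q; rw [hφ, hψ]⟩

end
end Dev
end Multigraph
namespace Multigraph
section DevB
open Classical

variable {G H : Multigraph}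

/-- append a walk -/
def Walk.append {S v : G.V} (w : Walk G S v) : ∀ {x : G.V}, Walk G v x → Walk G S x
  | _, .nil => w
  | _, .snoc u e h => .snoc (w.append u) e h

/-- list of edges of a walk, last edge first -/
def Walk.edgeList {S : G.V} : ∀ {v : G.V}, Walk G S v → List G.E
  | _, .nil => []
  | _, .snoc w e _ => e :: w.edgeList

lemma Walk.edgeList_append {S v : G.V} (w : Walk G S v) :
    ∀ {x : G.V} (u : Walk G v x), (w.append u).edgeList = u.edgeList ++ w.edgeList
  | _, .nil => rfl
  | _, .snoc u e h => by simp [Walk.append, Walk.edgeList, Walk.edgeList_append w u]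

lemma walkFrom_eq_of_edgeList {S : G.V} :
    ∀ {v v' : G.V} (w : Walk G S v) (w' : Walk G S v'), w.edgeList = w'.edgeList →
      (⟨v, w⟩ : WalkFrom G S) = ⟨v', w'⟩
  | _, _, .nil, .nil, _ => rfl
  | _, _, .nil, .snoc _ _ _, h => by simp [Walk.edgeList] at h
  | _, _, .snoc _ _ _, .nil, h => by simp [Walk.edgeList] at h
  | _, _, .snoc w e he, .snoc w' e' he', h => by
      simp only [Walk.edgeList, List.cons.injEq] at h
      obtain ⟨rfl, h2⟩ := h
      have := walkFrom_eq_of_edgeList w w' h2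
      obtain ⟨rfl, h4⟩ := Sigma.mk.inj_iff.mp this
      obtain rfl := eq_of_heq h4
      rfl

lemma walkFrom_edgeList_congr {S : G.V} {x y : WalkFrom G S} (h : x = y) :
    x.2.edgeList = y.2.edgeList := by subst h; rfl

/-- length of length-cast walk -/
lemma Walk.length_cast {S : G.V} {v v' : G.V} (h : v = v') (w : Walk G S v) :
    (h ▸ w : Walk G S v').length = w.length := by subst h; rfl

/-- Homs map walks, preserving length. -/
lemma Hom.walk_map (φ : Hom G H) {S v : G.V} (w : Walk G S v) :
    ∃ w' : Walk H (φ.onV S) (φ.onV v), w'.length = w.length := by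
  induction w with
  | nil => exact ⟨.nil, rfl⟩
  | snoc u e h ih =>
    obtain ⟨w', hw'⟩ := ih
    refine ⟨φ.map_t e ▸ (w'.snoc (φ.onE e) (by rw [φ.map_o, h])), ?_⟩
    rw [Walk.length_cast]
    show w'.length + 1 = _
    rw [hw']; rfl

lemma Hom.reaches (φ : Hom G H) {a b : G.V} (h : Reaches G a b) :
    Reaches H (φ.onV a) (φ.onV b) := by
  obtain ⟨w⟩ := h
  obtain ⟨w', _⟩ := φ.walk_map w
  exact ⟨w'⟩

/-- each vertex of an unfolding tree carries its length -/
def wLen {S : G.V} (x : WalkFrom G S) : ℕ := x.2.length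

lemma unfold_walk_len {S : G.V} {x y : WalkFrom G S}
    (w : Walk (unfoldTree G S) x y) : wLen y = wLen x + w.length := by
  suffices key : ∀ {y' : (unfoldTree G S).V} (w : Walk (unfoldTree G S) x y'),
      wLen (G := G) (S := S) y' = wLen x + w.length from key w
  intro y w
  induction w with
  | nil => rfl
  | snoc u e h ih =>
    obtain ⟨v0, w0, e0⟩ := e
    subst h
    have h2 : w0.length = wLen x + u.length := ih
    show w0.length + 1 = wLen x + (u.length + 1)
    omega

lemma unfold_reaches_len {S : G.V} {x y : WalkFrom G S}
    (h : Reaches (unfoldTree G S) x y) : wLen x ≤ wLen y := by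
  obtain ⟨w⟩ := h
  rw [unfold_walk_len w]
  exact Nat.le_add_right _ _

end DevB
end Multigraph
namespace Multigraph
section DevC
open Classical

variable {G H : Multigraph}

noncomputable def Iso.outIso (φ : Iso G H) (x : G.V) :
    Iso (outGraph G x) (outGraph H (φ.onV x)) where
  onV := fun y => ⟨φ.onV y.1, φ.toHom.reaches y.2⟩
  onE := fun e => ⟨φ.onE e.1, by rw [φ.map_o]; exact φ.toHom.reaches e.2⟩
  map_o := fun e => Subtype.ext (φ.map_o e.1)
  map_t := fun e => Subtype.ext (φ.map_t e.1)
  bijV := by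
    constructor
    · intro a b hab
      exact Subtype.ext (φ.bijV.1 (congrArg Subtype.val hab))
    · rintro ⟨z, hz⟩
      refine ⟨⟨φ.eV.symm z, ?_⟩, Subtype.ext (φ.eV.apply_symm_apply z)⟩
      have := (Iso.symm φ).toHom.reaches hz
      rwa [Iso.symm_onV_onV] at this
  bijE := by
    constructor
    · intro a b hab
      exact Subtype.ext (φ.bijE.1 (congrArg Subtype.val hab))
    · rintro ⟨f, hf⟩
      refine ⟨⟨φ.eE.symm f, ?_⟩, Subtype.ext (φ.eE.apply_symm_apply f)⟩
      have := (Iso.symm φ).toHom.reaches hf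
      rw [Iso.symm_onV_onV] at this
      have ho : (Iso.symm φ).onV (H.o f) = G.o ((Iso.symm φ).onE f) :=
        ((Iso.symm φ).map_o f).symm
      rwa [ho] at this

lemma Iso.outRootedIso (φ : Iso G H) (x : G.V) :
    RootedIso (outGraph G x) (rootOut G x) (outGraph H (φ.onV x)) (rootOut H (φ.onV x)) :=
  ⟨φ.outIso x, Subtype.ext rfl⟩

/-- extension of a walk by a walk from its terminus -/
def extendWalk {S : G.V} (w : WalkFrom G S) (u : WalkFrom G w.1) : WalkFrom G S :=
  ⟨u.1, w.2.append u.2⟩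

lemma reaches_extend {S : G.V} (w : WalkFrom G S) (u : WalkFrom G w.1) :
    Reaches (unfoldTree G S) w (extendWalk w u) := by
  obtain ⟨u1, u2⟩ := u
  induction u2 with
  | nil => exact ⟨Walk.nil⟩
  | snoc u e h ih =>
    obtain ⟨wk⟩ := ih
    exact ⟨wk.snoc ⟨_, (w.2.append u, ⟨e, h⟩)⟩ rfl⟩

lemma extend_surj {S : G.V} (w : WalkFrom G S) :
    ∀ {y : WalkFrom G S}, Walk (unfoldTree G S) w y → ∃ u : WalkFrom G w.1, extendWalk w u = y := by
  suffices key : ∀ {y' : (unfoldTree G S).V}, Walk (unfoldTree G S) w y' →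
      ∃ u : WalkFrom G w.1, extendWalk w u = y' from fun {_} wk => key wk
  intro y wk
  induction wk with
  | nil => exact ⟨⟨w.1, Walk.nil⟩, rfl⟩
  | snoc wk E0 h ih =>
    obtain ⟨⟨z1, z2⟩, hz⟩ := ih
    obtain ⟨v0, w0, e0⟩ := E0
    have heq : (⟨z1, w.2.append z2⟩ : WalkFrom G S) = ⟨v0, w0⟩ := hz.trans h.symm
    have h1 : z1 = v0 := congrArg Sigma.fst heq
    subst h1
    have h2 : w.2.append z2 = w0 := eq_of_heq (Sigma.mk.inj_iff.mp heq).2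
    subst h2
    exact ⟨⟨G.t e0.1, z2.snoc e0.1 e0.2⟩, rfl⟩

lemma extend_inj {S : G.V} (w : WalkFrom G S) {u u' : WalkFrom G w.1}
    (h : extendWalk w u = extendWalk w u') : u = u' := by
  have hl := walkFrom_edgeList_congr h
  simp only [extendWalk, Walk.edgeList_append] at hl
  have hl2 : u.2.edgeList = u'.2.edgeList := by
    have := List.append_cancel_right hl
    exact this
  obtain ⟨u1, u2⟩ := u
  obtain ⟨u1', u2'⟩ := u'
  exact walkFrom_eq_of_edgeList u2 u2' hl2

noncomputable def rerootIso {S : G.V} (w : WalkFrom G S) :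
    Iso (unfoldTree G w.1) (outGraph (unfoldTree G S) w) where
  onV := fun u => ⟨extendWalk w u, reaches_extend w u⟩
  onE := fun x => ⟨⟨x.1, (w.2.append x.2.1, x.2.2)⟩, reaches_extend w ⟨x.1, x.2.1⟩⟩
  map_o := fun x => Subtype.ext rfl
  map_t := fun x => Subtype.ext rfl
  bijV := by
    constructor
    · intro a b hab
      exact extend_inj w (congrArg Subtype.val hab)
    · rintro ⟨y, hy⟩
      obtain ⟨wk⟩ := hy
      obtain ⟨u, hu⟩ := extend_surj w wk
      exact ⟨u, Subtype.ext hu⟩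
  bijE := by
    constructor
    · intro a b hab
      have hval : (⟨a.1, (w.2.append a.2.1, a.2.2)⟩ : (unfoldTree G S).E)
          = ⟨b.1, (w.2.append b.2.1, b.2.2)⟩ := congrArg Subtype.val hab
      have ho : extendWalk w ⟨a.1, a.2.1⟩ = extendWalk w ⟨b.1, b.2.1⟩ :=
        congrArg (unfoldTree G S).o hval
      have := extend_inj w ho
      obtain ⟨a1, aw, ae⟩ := a
      obtain ⟨b1, bw, be⟩ := b
      have h1 : a1 = b1 := congrArg Sigma.fst this
      subst h1
      have h2 : aw = bw := eq_of_heq (Sigma.mk.inj_iff.mp this).2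
      subst h2
      have h3 := (Sigma.mk.inj_iff.mp hval).2
      have h4 := eq_of_heq h3
      have h5 : ae = be := by
        have := congrArg Prod.snd h4
        exact this
      subst h5
      rfl
    · rintro ⟨⟨f1, fw, fe⟩, hf⟩
      obtain ⟨wk⟩ := hf
      obtain ⟨⟨u1, u2⟩, hu⟩ := extend_surj w wk
      have h1 : u1 = f1 := congrArg Sigma.fst hu
      subst h1
      have h2 : w.2.append u2 = fw := eq_of_heq (Sigma.mk.inj_iff.mp hu).2
      subst h2
      exact ⟨⟨u1, (u2, fe)⟩, Subtype.ext rfl⟩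

lemma rerootRootedIso {S : G.V} (w : WalkFrom G S) :
    RootedIso (outGraph (unfoldTree G S) w) (rootOut (unfoldTree G S) w)
      (unfoldTree G w.1) (nilWalk G w.1) :=
  RootedIso.symm ⟨rerootIso w, Subtype.ext rfl⟩

end DevC
end Multigraph
namespace Multigraph
section DevD
open Classical

variable {T : Multigraph}

def delHom (T : Multigraph) (F : Set T.E) : Hom (deleteEdges T F) T :=
  ⟨Subtype.val, Subtype.val, fun _ => rfl, fun _ => rfl⟩

/-- lifting walks into the deleted graph, when all relevant edges survive -/
lemma delete_lift {F : Set T.E} (x : (deleteEdges T F).V)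
    (hfar : ∀ e : T.E, Reaches T x.1 (T.o e) → e ∉ F) :
    ∀ {y : T.V}, Walk T x.1 y →
      ∃ hy : ¬((∃ e, T.o e = y ∨ T.t e = y) ∧ ∀ e, (T.o e = y ∨ T.t e = y) → e ∈ F),
        Reaches (deleteEdges T F) x ⟨y, hy⟩ := by
  intro y wk
  induction wk with
  | nil => exact ⟨x.2, ⟨Walk.nil⟩⟩
  | snoc wk e h ih =>
    obtain ⟨hv, ⟨wk'⟩⟩ := ih
    have henf : e ∉ F := hfar e (h ▸ ⟨wk⟩)
    have hy : ¬((∃ f, T.o f = T.t e ∨ T.t f = T.t e) ∧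
        ∀ f, (T.o f = T.t e ∨ T.t f = T.t e) → f ∈ F) := by
      rintro ⟨-, hall⟩
      exact henf (hall e (Or.inr rfl))
    refine ⟨hy, ⟨?_⟩⟩
    have := wk'.snoc (⟨e, henf⟩ : (deleteEdges T F).E) (Subtype.ext h)
    exact this

lemma delete_out_rootedIso {F : Set T.E} (x : (deleteEdges T F).V)
    (hfar : ∀ e : T.E, Reaches T x.1 (T.o e) → e ∉ F) :
    RootedIso (outGraph (deleteEdges T F) x) (rootOut _ x) (outGraph T x.1) (rootOut T x.1) := by
  have hreachT : ∀ {y : (deleteEdges T F).V},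
      Reaches (deleteEdges T F) x y → Reaches T x.1 y.1 :=
    fun h => (delHom T F).reaches h
  refine ⟨⟨⟨fun y => ⟨y.1.1, hreachT y.2⟩,
            fun e => ⟨e.1.1, hreachT e.2⟩,
            fun e => Subtype.ext rfl,
            fun e => Subtype.ext rfl⟩, ?_, ?_⟩, Subtype.ext rfl⟩
  · constructor
    · rintro ⟨⟨a, ha⟩, hra⟩ ⟨⟨b, hb⟩, hrb⟩ hab
      have : a = b := congrArg Subtype.val hab
      subst this
      rfl
    · rintro ⟨y, hy⟩
      obtain ⟨wk⟩ := hy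
      obtain ⟨hy', hr⟩ := delete_lift x hfar wk
      exact ⟨⟨⟨y, hy'⟩, hr⟩, Subtype.ext rfl⟩
  · constructor
    · rintro ⟨⟨a, ha⟩, hra⟩ ⟨⟨b, hb⟩, hrb⟩ hab
      have : a = b := congrArg Subtype.val hab
      subst this
      rfl
    · rintro ⟨f, hf⟩
      have hnf : f ∉ F := hfar f hf
      obtain ⟨wk⟩ := hf
      obtain ⟨hy', hr⟩ := delete_lift x hfar wk
      refine ⟨⟨⟨f, hnf⟩, ?_⟩, Subtype.ext rfl⟩
      obtain ⟨wk'⟩ := hr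
      exact ⟨wk'⟩
  
end DevD
end Multigraph
namespace Multigraph
section DevE
open Classical

variable {G H : Multigraph}

lemma pair_inj {S v : G.V} {w w' : Walk G S v} {x y : {e // G.o e = v}}
    (h : (⟨v, (w, x)⟩ : Σ u, Walk G S u × {e // G.o e = u}) = ⟨v, (w', y)⟩) :
    w = w' ∧ x = y := by
  have h2 := eq_of_heq (Sigma.mk.inj_iff.mp h).2
  exact ⟨congrArg Prod.fst h2, congrArg Prod.snd h2⟩

lemma mk_F0 {a : G.V} {b : H.V} (Φ : Iso (unfoldTree G a) (unfoldTree H b))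
    (hΦ : Φ.onV (nilWalk G a) = nilWalk H b) (e : {e : G.E // G.o e = a}) :
    ∃ f : {f : H.E // H.o f = b}, Φ.onE ⟨a, (Walk.nil, e)⟩ = ⟨b, (Walk.nil, f)⟩ := by
  have ho : (unfoldTree H b).o (Φ.onE ⟨a, (Walk.nil, e)⟩) = ⟨b, Walk.nil⟩ := by
    exact (Φ.map_o ⟨a, (Walk.nil, e)⟩).trans hΦ
  revert ho
  generalize Φ.onE ⟨a, (Walk.nil, e)⟩ = y
  obtain ⟨y1, yw, ye⟩ := y
  intro ho
  have h1 : y1 = b := congrArg Sigma.fst ho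
  subst h1
  have h2 : yw = Walk.nil := eq_of_heq (Sigma.mk.inj_iff.mp ho).2
  subst h2
  exact ⟨ye, rfl⟩

/-- tree equivalence of vertices of two graphs -/
def TEq (G : Multigraph) (v : G.V) (H : Multigraph) (w : H.V) : Prop :=
  RootedIso (unfoldTree G v) (nilWalk G v) (unfoldTree H w) (nilWalk H w)

lemma root_edge_iso {a : G.V} {b : H.V}
    (hab : TEq G a H b) :
    ∃ σ : {e : G.E // G.o e = a} ≃ {f : H.E // H.o f = b},
      ∀ e, TEq G (G.t e.1) H (H.t (σ e).1) := by
  obtain ⟨Φ, hΦ⟩ := hab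
  have hΨ : (Iso.symm Φ).onV (nilWalk H b) = nilWalk G a := by
    rw [← hΦ]; exact Φ.eV.symm_apply_apply _
  set Ψ := Iso.symm Φ with hΨdef
  have F0 : ∀ e : {e : G.E // G.o e = a}, {f : {f : H.E // H.o f = b} //
      Φ.onE ⟨a, (Walk.nil, e)⟩ = ⟨b, (Walk.nil, f)⟩} :=
    fun e => ⟨(mk_F0 Φ hΦ e).choose, (mk_F0 Φ hΦ e).choose_spec⟩
  have G0 : ∀ f : {f : H.E // H.o f = b}, {e : {e : G.E // G.o e = a} //
      Ψ.onE ⟨b, (Walk.nil, f)⟩ = ⟨a, (Walk.nil, e)⟩} :=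
    fun f => ⟨(mk_F0 Ψ hΨ f).choose, (mk_F0 Ψ hΨ f).choose_spec⟩
  have left_inv : ∀ e, (G0 (F0 e).1).1 = e := by
    intro e
    have h1 : Ψ.onE ⟨b, (Walk.nil, (F0 e).1)⟩ = ⟨a, (Walk.nil, e)⟩ := by
      rw [← (F0 e).2, hΨdef]; exact Iso.symm_onE_onE Φ _
    have h2 := (G0 (F0 e).1).2
    have := h1.symm.trans h2
    exact ((pair_inj this).2).symm
  have right_inv : ∀ f, (F0 (G0 f).1).1 = f := by
    intro f
    have h1 : Φ.onE ⟨a, (Walk.nil, (G0 f).1)⟩ = ⟨b, (Walk.nil, f)⟩ := by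
      rw [← (G0 f).2, hΨdef]; exact Iso.onE_symm_onE Φ _
    have h2 := (F0 (G0 f).1).2
    have := h1.symm.trans h2
    exact ((pair_inj this).2).symm
  refine ⟨⟨fun e => (F0 e).1, fun f => (G0 f).1, left_inv, right_inv⟩, ?_⟩
  intro e
  set wv : WalkFrom G a := ⟨G.t e.1, Walk.nil.snoc e.1 e.2⟩ with hwv
  have R : RootedIso (unfoldTree G wv.1) (nilWalk G wv.1)
      (unfoldTree H (Φ.onV wv).1) (nilWalk H (Φ.onV wv).1) :=
    ((rerootRootedIso wv).symm.trans (Φ.outRootedIso wv)).trans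
      (rerootRootedIso (Φ.onV wv))
  have hmt : Φ.onV wv = (unfoldTree H b).t (Φ.onE ⟨a, (Walk.nil, e)⟩) := by
    have h5 := (Φ.map_t ⟨a, (Walk.nil, e)⟩).symm
    exact h5
  rw [(F0 e).2] at hmt
  have hv : (Φ.onV wv).1 = H.t ((F0 e).1).1 := by rw [hmt]; rfl
  show RootedIso _ _ _ _
  rw [hv] at R
  exact R

end DevE
end Multigraph
namespace Multigraph
section DevF
open Classical

variable {G H K : Multigraph}

lemma TEq.refl (G : Multigraph) (v : G.V) : TEq G v G v := RootedIso.rfl _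

lemma TEq.symm {v : G.V} {w : H.V} (h : TEq G v H w) : TEq H w G v := RootedIso.symm h

lemma TEq.trans {v : G.V} {w : H.V} {u : K.V} (h : TEq G v H w) (h' : TEq H w K u) :
    TEq G v K u := RootedIso.trans h h'

/-- In a non-redundant graph, tree-equivalent vertices are equal. -/
lemma teq_eq (hnr : NonRedundant G) {v w : G.V} (h : TEq G v G w) : v = w := by
  let st : Setoid G.V := ⟨fun a b => TEq G a G b,
    ⟨fun a => TEq.refl G a, fun h => h.symm, fun h h' => h.trans h'⟩⟩
  let rep : G.V → G.V := fun v => (@Quotient.mk _ st v).out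
  have hrep : ∀ v, TEq G (rep v) G v := by
    intro v
    have : (@Quotient.mk _ st ((@Quotient.mk _ st v).out)) = @Quotient.mk _ st v :=
      Quotient.out_eq _
    exact Quotient.exact this
  have hrepinv : ∀ a b, TEq G a G b → rep a = rep b := by
    intro a b hab
    exact congrArg Quotient.out (Quotient.sound (hab : st.r a b))
  have hσ : ∀ v : G.V, ∃ σ : {e // G.o e = rep v} ≃ {e // G.o e = v},
      ∀ x, TEq G (G.t x.1) G (G.t (σ x).1) := fun v => root_edge_iso (hrep v)
  let σ : ∀ v, {e // G.o e = rep v} ≃ {e // G.o e = v} := fun v => (hσ v).choose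
  have σspec : ∀ v x, TEq G (G.t x.1) G (G.t ((σ v) x).1) := fun v => (hσ v).choose_spec
  let m' : ∀ v, {e // G.o e = v} → G.E := fun v x => ((σ v).symm x).1
  let m : G.E → G.E := fun e => m' (G.o e) ⟨e, rfl⟩
  have hm : ∀ v (x : {e // G.o e = v}), m x.1 = m' v x := by
    rintro v ⟨e, rfl⟩
    rfl
  have hmt' : ∀ v (x : {e // G.o e = v}), TEq G (G.t (m' v x)) G (G.t x.1) := by
    intro v x
    have h5 := σspec v ((σ v).symm x)
    rw [Equiv.apply_symm_apply] at h5
    exact h5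
  let s : GraphEquiv G := {
    rV := fun a b => TEq G a G b
    rE := fun e f => TEq G (G.o e) G (G.o f) ∧ m e = m f
    equivV := ⟨fun a => TEq.refl G a, fun h => h.symm, fun h h' => h.trans h'⟩
    equivE := ⟨fun e => ⟨TEq.refl G _, rfl⟩,
      fun h => ⟨h.1.symm, h.2.symm⟩,
      fun h h' => ⟨h.1.trans h'.1, h.2.trans h'.2⟩⟩
    compat_o := fun e f h5 => h5.1
    compat_t := by
      rintro e f ⟨h1, h2⟩
      have a1 : TEq G (G.t (m e)) G (G.t e) := hmt' (G.o e) ⟨e, rfl⟩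
      have a2 : TEq G (G.t (m f)) G (G.t f) := hmt' (G.o f) ⟨f, rfl⟩
      rw [h2] at a1
      exact (a1.symm).trans a2 |>.symm.symm
  }
  have hNEC : s.NonEdgeCollapsing := by
    intro v v' hvv' e he
    have hrr : rep v = rep v' := hrepinv v v' hvv'
    set x : {e // G.o e = rep v} := (σ v).symm ⟨e, he⟩ with hx
    have hx' : G.o x.1 = rep v' := x.2.trans hrr
    set e' : G.E := ((σ v') ⟨x.1, hx'⟩).1 with he'def
    have ho' : G.o e' = v' := ((σ v') ⟨x.1, hx'⟩).2
    have hme : m e = x.1 := by rw [hm v ⟨e, he⟩]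
    have hme' : m e' = x.1 := by
      rw [hm v' ⟨e', ho'⟩]
      show ((σ v').symm ⟨e', ho'⟩).1 = x.1
      have : (⟨e', ho'⟩ : {e // G.o e = v'}) = (σ v') ⟨x.1, hx'⟩ := Subtype.ext rfl
      rw [this, Equiv.symm_apply_apply]
    refine ⟨e', ⟨ho', ?_, hme.trans hme'.symm⟩, ?_⟩
    · rw [he, ho']; exact hvv'
    · rintro e'' ⟨ho'', -, h2⟩
      have hme'' : m e'' = x.1 := h2.symm.trans hme
      rw [hm v' ⟨e'', ho''⟩] at hme''
      have h6 : ((σ v').symm ⟨e'', ho''⟩) = ⟨x.1, hx'⟩ := Subtype.ext hme''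
      have h7 := congrArg (σ v') h6
      rw [Equiv.apply_symm_apply] at h7
      exact congrArg Subtype.val h7
  obtain ⟨h1, -⟩ := hnr s hNEC
  exact h1 v w h

end DevF
end Multigraph
namespace Multigraph
section DevG
open Classical

variable {G H : Multigraph}

noncomputable def rstep {S : G.V} (hrob : RobustlyRooted G)
    (p : Σ' w : WalkFrom G S, IsRoot G w.1) : Σ' w : WalkFrom G S, IsRoot G w.1 :=
  ⟨⟨G.t (hrob.2 p.1.1 p.2).choose, p.1.2.snoc _ (hrob.2 p.1.1 p.2).choose_spec.1⟩,
   (hrob.2 p.1.1 p.2).choose_spec.2⟩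

noncomputable def rchain (hrob : RobustlyRooted G) {S : G.V} (hS : IsRoot G S) :
    ℕ → Σ' w : WalkFrom G S, IsRoot G w.1 :=
  fun n => Nat.rec ⟨nilWalk G S, hS⟩ (fun _ p => rstep hrob p) n

lemma extract (hGrob : RobustlyRooted G) {SG : G.V} (hSG : IsRoot G SG)
    {SH : H.V} {F1 : Set (unfoldTree G SG).E} (hF1 : F1.Finite)
    {F2 : Set (unfoldTree H SH).E} (hF2 : F2.Finite)
    (φ : Iso (deleteEdges (unfoldTree G SG) F1) (deleteEdges (unfoldTree H SH) F2)) :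
    ∃ (v1 : G.V) (v2 : H.V), IsRoot G v1 ∧ TEq G v1 H v2 := by
  -- bounds
  obtain ⟨b1, hb1⟩ := (hF1.image (fun f => f.2.1.length)).bddAbove
  obtain ⟨b2, hb2⟩ := (hF2.image (fun f => f.2.1.length)).bddAbove
  set N := b1 + 1 with hN
  set K := b2 + 1 with hK
  have hF1len : ∀ f ∈ F1, f.2.1.length < N := by
    intro f hf
    have := hb1 (Set.mem_image_of_mem _ hf)
    omega
  have hF2len : ∀ f ∈ F2, f.2.1.length < K := by
    intro f hf
    have := hb2 (Set.mem_image_of_mem _ hf)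
    omega
  -- the chain
  set c : ℕ → WalkFrom G SG := fun n => (rchain hGrob hSG n).1 with hc
  have clen : ∀ n, (c n).2.length = n := by
    intro n
    induction n with
    | zero => rfl
    | succ n ih =>
      show (c n).2.length + 1 = n + 1
      omega
  set chE : ℕ → (unfoldTree G SG).E := fun n =>
    ⟨(c n).1, ((c n).2, ⟨(hGrob.2 (c n).1 (rchain hGrob hSG n).2).choose,
      (hGrob.2 (c n).1 (rchain hGrob hSG n).2).choose_spec.1⟩)⟩ with hchE
  have chE_o : ∀ n, (unfoldTree G SG).o (chE n) = c n := fun n => rfl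
  have chE_t : ∀ n, (unfoldTree G SG).t (chE n) = c (n + 1) := fun n => rfl
  have notinF1 : ∀ n, N ≤ n → chE n ∉ F1 := by
    intro n hn hin
    have := hF1len _ hin
    have h2 : (chE n).2.1.length = n := clen n
    omega
  -- kept vertices
  have kp : ∀ n, N ≤ n →
      ¬((∃ e, (unfoldTree G SG).o e = c n ∨ (unfoldTree G SG).t e = c n) ∧ ∀ e, ((unfoldTree G SG).o e = c n ∨ (unfoldTree G SG).t e = c n) → e ∈ F1) := by
    intro n hn hcon
    exact notinF1 n hn (hcon.2 (chE n) (Or.inl (chE_o n)))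
  set x : ∀ n, N ≤ n → (deleteEdges (unfoldTree G SG) F1).V := fun n hn => ⟨c n, kp n hn⟩ with hx
  -- walk inside the deleted tree along the chain
  have dwalk : ∀ i, ∃ wk : Walk (deleteEdges (unfoldTree G SG) F1) (x N (le_refl N))
      (x (N + i) (Nat.le_add_right N i)), wk.length = i := by
    intro i
    induction i with
    | zero => exact ⟨Walk.nil, rfl⟩
    | succ i ih =>
      obtain ⟨wk, hwk⟩ := ih
      refine ⟨Walk.snoc wk ⟨chE (N + i), notinF1 _ (Nat.le_add_right N i)⟩ (Subtype.ext rfl), ?_⟩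
      show wk.length + 1 = i + 1
      omega
  set star := x (N + K + 1) (by omega) with hstar
  have hfar1 : ∀ e : (unfoldTree G SG).E, Reaches (unfoldTree G SG) star.1 ((unfoldTree G SG).o e) → e ∉ F1 := by
    intro e hr hin
    have h1 := unfold_reaches_len hr
    have h2 : wLen (star.1) = N + K + 1 := clen _
    have h3 : wLen ((unfoldTree G SG).o e) = e.2.1.length := rfl
    have h4 := hF1len _ hin
    omega
  have A1 := delete_out_rootedIso star hfar1
  have A2 := rerootRootedIso (S := SG) star.1
  have A3 := φ.outRootedIso star
  set ystar : WalkFrom H SH := (φ.onV star).1 with hystar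
  -- length bound for ystar
  have hlen : K < wLen ystar := by
    obtain ⟨wk, hwk⟩ := dwalk (K + 1)
    obtain ⟨wk', hwk'⟩ := φ.toHom.walk_map wk
    obtain ⟨wk'', hwk''⟩ := (delHom (unfoldTree H SH) F2).walk_map wk'
    have h5 := unfold_walk_len (S := SH) wk''
    have h7 : x (N + (K + 1)) (Nat.le_add_right N (K + 1)) = star := by
      apply Subtype.ext
      show c (N + (K + 1)) = c (N + K + 1)
      congr 1
    have h8 : wLen ((delHom (unfoldTree H SH) F2).onV
        (φ.onV (x (N + (K + 1)) (Nat.le_add_right N (K + 1))))) = wLen ystar := by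
      rw [h7]
      rfl
    omega
  have hfar2 : ∀ f : (unfoldTree H SH).E, Reaches (unfoldTree H SH) ystar ((unfoldTree H SH).o f) → f ∉ F2 := by
    intro f hr hin
    have h1 := unfold_reaches_len hr
    have h3 : wLen ((unfoldTree H SH).o f) = f.2.1.length := rfl
    have h4 := hF2len _ hin
    omega
  have A4 := delete_out_rootedIso (φ.onV star) hfar2
  have A5 := rerootRootedIso (S := SH) (φ.onV star).1
  have R := ((A1.symm.trans A3).trans A4).trans A5
  have total := A2.symm.trans R
  exact ⟨star.1.1, (φ.onV star).1.1, (rchain hGrob hSG (N + K + 1)).2, total⟩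

end DevG
end Multigraph

open Multigraph

/-- Finite non-redundant robustly rooted multigraphs with almost isomorphic
unfolding trees are isomorphic. -/
theorem statement13 (G H : Multigraph)
    [Fintype G.V] [Fintype G.E] [Fintype H.V] [Fintype H.E]
    (hGnr : NonRedundant G) (hHnr : NonRedundant H)
    (hGrob : RobustlyRooted G) (hHrob : RobustlyRooted H)
    (SG : G.V) (SH : H.V) (hSG : IsRoot G SG) (hSH : IsRoot H SH)
    (hAI : AlmostIso (unfoldTree G SG) (unfoldTree H SH)) :
    Nonempty (Iso G H) := by
  classical
  obtain ⟨F1, hF1, F2, hF2, ⟨φ⟩⟩ := hAI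
  obtain ⟨v1, v2, hv1root, hv12⟩ := extract hGrob hSG hF1 hF2 φ
  obtain ⟨v2', v1', hv2root, hv21⟩ := extract hHrob hSH hF2 hF1 (Iso.symm φ)
  have exG : ∀ v : G.V, ∃ w : H.V, TEq G v H w := by
    intro v
    obtain ⟨wk⟩ := hv1root v
    induction wk with
    | nil => exact ⟨v2, hv12⟩
    | snoc u e h ih =>
      obtain ⟨w', hw'⟩ := ih
      obtain ⟨σ, hσ⟩ := root_edge_iso hw'
      exact ⟨H.t (σ ⟨e, h⟩).1, hσ ⟨e, h⟩⟩
  have exH : ∀ w : H.V, ∃ v : G.V, TEq H w G v := by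
    intro w
    obtain ⟨wk⟩ := hv2root w
    induction wk with
    | nil => exact ⟨v1', hv21⟩
    | snoc u e h ih =>
      obtain ⟨v', hv'⟩ := ih
      obtain ⟨σ, hσ⟩ := root_edge_iso hv'
      exact ⟨G.t (σ ⟨e, h⟩).1, hσ ⟨e, h⟩⟩
  set ψ : G.V → H.V := fun v => (exG v).choose with hψdef
  have hψ : ∀ v, TEq G v H (ψ v) := fun v => (exG v).choose_spec
  have injψ : Function.Injective ψ := by
    intro v v' hvv'
    apply teq_eq hGnr
    have h2 := (hψ v').symm
    rw [← hvv'] at h2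
    exact (hψ v).trans h2
  have surjψ : Function.Surjective ψ := by
    intro w
    obtain ⟨v, hvw⟩ := exH w
    exact ⟨v, teq_eq hHnr ((hψ v).symm.trans hvw.symm)⟩
  have hσv : ∀ v : G.V, ∃ σ : {e // G.o e = v} ≃ {f // H.o f = ψ v},
      ∀ x, TEq G (G.t x.1) H (H.t (σ x).1) := fun v => root_edge_iso (hψ v)
  set σv : ∀ v : G.V, {e // G.o e = v} ≃ {f // H.o f = ψ v} :=
    fun v => (hσv v).choose with hσvdef
  have σspec : ∀ v x, TEq G (G.t x.1) H (H.t ((σv v) x).1) := fun v => (hσv v).choose_spec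
  set onE : G.E → H.E := fun e => ((σv (G.o e)) ⟨e, rfl⟩).1 with honE
  have onE_eq : ∀ (v : G.V) (x : {e // G.o e = v}), onE x.1 = ((σv v) x).1 := by
    rintro v ⟨e, rfl⟩
    rfl
  have map_o : ∀ e, H.o (onE e) = ψ (G.o e) := fun e => ((σv (G.o e)) ⟨e, rfl⟩).2
  have map_t : ∀ e, H.t (onE e) = ψ (G.t e) := by
    intro e
    apply teq_eq hHnr
    have h1 : TEq G (G.t e) H (H.t (onE e)) := σspec (G.o e) ⟨e, rfl⟩
    exact h1.symm.trans (hψ (G.t e))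
  have injE : Function.Injective onE := by
    intro e e' hee'
    have ho : ψ (G.o e) = ψ (G.o e') := by
      rw [← map_o e, ← map_o e', hee']
    have hoo : G.o e' = G.o e := (injψ ho).symm
    have h1 : onE e = ((σv (G.o e)) ⟨e, rfl⟩).1 := rfl
    have h2 : onE e' = ((σv (G.o e)) ⟨e', hoo⟩).1 := onE_eq (G.o e) ⟨e', hoo⟩
    have h3 : ((σv (G.o e)) ⟨e, rfl⟩) = ((σv (G.o e)) ⟨e', hoo⟩) := by
      apply Subtype.ext
      rw [← h1, ← h2, hee']
    have h4 := (σv (G.o e)).injective h3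
    exact congrArg Subtype.val h4
  have surjE : Function.Surjective onE := by
    intro f
    obtain ⟨v, hv⟩ := surjψ (H.o f)
    set x : {e // G.o e = v} := (σv v).symm ⟨f, hv.symm⟩ with hxdef
    refine ⟨x.1, ?_⟩
    rw [onE_eq v x, hxdef, Equiv.apply_symm_apply]
  exact ⟨⟨⟨ψ, onE, map_o, map_t⟩, ⟨injψ, surjψ⟩, ⟨injE, surjE⟩⟩⟩
end

section
/- For any finite multigraph G with root S, and any basis B of a cofinite inescapable subspace of the unfolding tree T(G, S), the equality S = Σ_{p ∈ B} T(p) holds in the graph monoid M(G), where T(p) denotes the terminus of the walk p. -/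
open Multigraph

namespace Multigraph

variable {G : Multigraph} {S : G.V}

/-- The list of edges of a walk. -/
def wlist : ∀ {v : G.V}, Walk G S v → List G.E
  | _, .nil => []
  | _, .snoc w e _ => wlist w ++ [e]

theorem append_singleton_inj {α : Type*} {l1 l2 : List α} {a b : α}
    (h : l1 ++ [a] = l2 ++ [b]) : l1 = l2 ∧ a = b := by
  constructor
  · apply List.append_inj_left' h; simp
  · simpa using List.append_inj_right' h (by simp)

theorem prefix_concat_cases {α : Type*} {l1 l2 : List α} {a : α}
    (h : l1 <+: l2 ++ [a]) : l1 = l2 ++ [a] ∨ l1 <+: l2 := by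
  rcases h with ⟨t, ht⟩
  rcases t.eq_nil_or_concat with rfl | ⟨t', b, rfl⟩
  · left; simpa using ht
  · right
    rw [List.concat_eq_append, ← List.append_assoc] at ht
    exact ⟨t', (append_singleton_inj ht).1⟩

theorem wlist_inj : ∀ {v₁ : G.V} (w₁ : Walk G S v₁) {v₂ : G.V} (w₂ : Walk G S v₂),
    wlist w₁ = wlist w₂ → (⟨v₁, w₁⟩ : WalkFrom G S) = ⟨v₂, w₂⟩ := by
  intro v₁ w₁
  induction w₁ with
  | nil =>
    intro v₂ w₂ h
    cases w₂ with
    | nil => rfl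
    | snoc u e he => simp [wlist] at h
  | snoc u e he ih =>
    intro v₂ w₂ h
    cases w₂ with
    | nil => simp [wlist] at h
    | snoc u' e' he' =>
      simp only [wlist] at h
      obtain ⟨h1, rfl⟩ := append_singleton_inj h
      have h3 := ih u' h1
      injection h3 with hv hw
      subst hv
      obtain rfl := eq_of_heq hw
      rfl

theorem eq_of_wlist_eq {x y : WalkFrom G S} (h : wlist x.2 = wlist y.2) : x = y := by
  obtain ⟨xv, xw⟩ := x; obtain ⟨yv, yw⟩ := y
  exact wlist_inj xw yw h

theorem prefix_wlist {x y : WalkFrom G S} (h : IsPrefix G S x y) :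
    wlist x.2 <+: wlist y.2 := by
  induction h with
  | refl => exact List.prefix_refl _
  | snoc u e he hp ih => exact ih.trans ⟨[e], rfl⟩

theorem prefix_of_wlist : ∀ {v : G.V} (u : Walk G S v) (x : WalkFrom G S),
    wlist x.2 <+: wlist u → IsPrefix G S x ⟨v, u⟩ := by
  intro v u
  induction u with
  | nil =>
    intro x h
    have h0 : wlist x.2 = [] := List.eq_nil_of_prefix_nil h
    obtain ⟨xv, xw⟩ := x
    have h1 : (⟨xv, xw⟩ : WalkFrom G S) = ⟨S, Walk.nil⟩ := wlist_inj xw Walk.nil h0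
    rw [h1]
    exact IsPrefix.refl _
  | snoc u e he ih =>
    intro x h
    simp only [wlist] at h
    rcases prefix_concat_cases h with heq | hpre
    · obtain ⟨xv, xw⟩ := x
      have h1 : (⟨xv, xw⟩ : WalkFrom G S) = ⟨G.t e, u.snoc e he⟩ :=
        wlist_inj xw (u.snoc e he) (by simpa [wlist] using heq)
      rw [h1]
      exact IsPrefix.refl _
    · exact IsPrefix.snoc u e he (ih x hpre)

theorem isPrefix_iff (x y : WalkFrom G S) :
    IsPrefix G S x y ↔ wlist x.2 <+: wlist y.2 := by
  constructor
  · exact prefix_wlist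
  · intro h
    obtain ⟨yv, yw⟩ := y
    exact prefix_of_wlist yw x h

theorem isPrefix_trans {x y z : WalkFrom G S} (h1 : IsPrefix G S x y)
    (h2 : IsPrefix G S y z) : IsPrefix G S x z :=
  (isPrefix_iff x z).mpr ((prefix_wlist h1).trans (prefix_wlist h2))

theorem isPrefix_comparable {x y u : WalkFrom G S} (hx : IsPrefix G S x u)
    (hy : IsPrefix G S y u) : IsPrefix G S x y ∨ IsPrefix G S y x := by
  rcases List.prefix_or_prefix_of_prefix (prefix_wlist hx) (prefix_wlist hy) with h | h
  · exact Or.inl ((isPrefix_iff x y).mpr h)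
  · exact Or.inr ((isPrefix_iff y x).mpr h)

theorem eq_of_prefix_length {x y : WalkFrom G S} (h : IsPrefix G S x y)
    (hl : (wlist y.2).length ≤ (wlist x.2).length) : x = y :=
  eq_of_wlist_eq ((prefix_wlist h).eq_of_length
    (Nat.le_antisymm (prefix_wlist h).length_le hl))

theorem prefix_snoc_self (w : WalkFrom G S) (e : G.E) (he : G.o e = w.1) :
    IsPrefix G S w ⟨G.t e, w.2.snoc e he⟩ := by
  obtain ⟨wv, ww⟩ := w
  exact IsPrefix.snoc ww e he (IsPrefix.refl _)

theorem exists_snoc_prefix {w b : WalkFrom G S} (h : IsPrefix G S w b) :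
    w ≠ b → ∃ (e : G.E) (he : G.o e = w.1), IsPrefix G S ⟨G.t e, w.2.snoc e he⟩ b := by
  induction h with
  | refl => intro hne; exact absurd rfl hne
  | snoc u e he hp ih =>
    intro _
    by_cases hw : w = (⟨_, u⟩ : WalkFrom G S)
    · subst hw
      exact ⟨e, he, IsPrefix.refl _⟩
    · obtain ⟨e', he', hp'⟩ := ih hw
      exact ⟨e', he', IsPrefix.snoc u e he hp'⟩

theorem nil_isPrefix (w : WalkFrom G S) : IsPrefix G S ⟨S, Walk.nil⟩ w :=
  (isPrefix_iff _ _).mpr (List.nil_prefix)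

theorem rel_sum {M : Type*} [AddCommMonoid M] {r : M → M → Prop} {ι : Type*}
    [DecidableEq ι] (s : Finset ι) (f g : ι → M)
    (h : ∀ i ∈ s, AddConGen.Rel r (f i) (g i)) :
    AddConGen.Rel r (∑ i ∈ s, f i) (∑ i ∈ s, g i) := by
  induction s using Finset.induction_on with
  | empty => simpa using AddConGen.Rel.refl 0
  | @insert a s ha ih =>
    rw [Finset.sum_insert ha, Finset.sum_insert ha]
    exact AddConGen.Rel.add (h _ (Finset.mem_insert_self _ _))
      (ih fun i hi => h i (Finset.mem_insert_of_mem hi))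

open scoped Classical in
theorem main_lemma {G : Multigraph} [Fintype G.E] {S : G.V} (B : Finset (WalkFrom G S))
    (hanti : ∀ b ∈ B, ∀ b' ∈ B, IsPrefix G S b b' → b = b')
    (hcomp : ∀ w : WalkFrom G S, ∃ b ∈ B, IsPrefix G S b w ∨ IsPrefix G S w b) :
    ∀ n : ℕ, ∀ w : WalkFrom G S,
      (∀ b ∈ B, IsPrefix G S b w → b = w) →
      (∀ b ∈ B, IsPrefix G S w b → (wlist b.2).length ≤ (wlist w.2).length + n) →
      AddConGen.Rel (monoidRel G) {w.1}
        (∑ b ∈ B.filter (fun b => IsPrefix G S w b), ({term b} : Multiset G.V)) := by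
  have case_mem : ∀ w ∈ B, B.filter (fun b => IsPrefix G S w b) = {w} := by
    intro w hwB
    ext b
    simp only [Finset.mem_filter, Finset.mem_singleton]
    constructor
    · rintro ⟨hb, hp⟩; exact (hanti w hwB b hb hp).symm
    · rintro rfl; exact ⟨hwB, IsPrefix.refl _⟩
  intro n
  induction n with
  | zero =>
    intro w hlow hlen
    by_cases hwB : w ∈ B
    · rw [case_mem w hwB, Finset.sum_singleton]
      exact AddConGen.Rel.refl _
    · exfalso
      obtain ⟨b₀, hb₀, hcc⟩ := hcomp w
      have hnp : ¬ IsPrefix G S b₀ w := fun hp => hwB ((hlow b₀ hb₀ hp) ▸ hb₀)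
      have hwb₀ : IsPrefix G S w b₀ := hcc.resolve_left hnp
      have hne₀ : w ≠ b₀ := fun h => hwB (h ▸ hb₀)
      have h1 := (prefix_wlist hwb₀).length_le
      have h2 := hlen b₀ hb₀ hwb₀
      have h3 : wlist w.2 ≠ wlist b₀.2 := fun h => hne₀ (eq_of_wlist_eq h)
      have h4 : wlist w.2 = wlist b₀.2 :=
        (prefix_wlist hwb₀).eq_of_length (by omega)
      exact h3 h4
  | succ n ih =>
    intro w hlow hlen
    by_cases hwB : w ∈ B
    · rw [case_mem w hwB, Finset.sum_singleton]
      exact AddConGen.Rel.refl _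
    · obtain ⟨b₀, hb₀, hcc⟩ := hcomp w
      have hnp : ¬ IsPrefix G S b₀ w := fun hp => hwB ((hlow b₀ hb₀ hp) ▸ hb₀)
      have hwb₀ : IsPrefix G S w b₀ := hcc.resolve_left hnp
      have hne₀ : w ≠ b₀ := fun h => hwB (h ▸ hb₀)
      obtain ⟨e₀, he₀, -⟩ := exists_snoc_prefix hwb₀ hne₀
      set Ew : Finset G.E := Finset.univ.filter (fun e => G.o e = w.1) with hEw
      -- step 1 : the defining relation at w.1
      have h1 : AddConGen.Rel (monoidRel G) ({w.1} : Multiset G.V)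
          (∑ e ∈ Ew, ({G.t e} : Multiset G.V)) := by
        have := AddConGen.Rel.of (r := monoidRel G) ({w.1} : Multiset G.V)
          (outSum G w.1) ⟨w.1, ⟨e₀, he₀⟩, rfl, rfl⟩
        simpa [outSum, hEw] using this
      -- partition of the basis elements extending w by first edge
      have hpart : B.filter (fun b => IsPrefix G S w b) =
          Ew.biUnion (fun e => B.filter (fun b =>
            ∃ he : G.o e = w.1, IsPrefix G S ⟨G.t e, w.2.snoc e he⟩ b)) := by
        ext b
        simp only [Finset.mem_biUnion, Finset.mem_filter, Finset.mem_univ, true_and, hEw]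
        constructor
        · rintro ⟨hb, hp⟩
          have hneb : w ≠ b := fun h => hwB (h ▸ hb)
          obtain ⟨e, he, hp'⟩ := exists_snoc_prefix hp hneb
          exact ⟨e, he, hb, he, hp'⟩
        · rintro ⟨e, he, hb, he', hp⟩
          exact ⟨hb, isPrefix_trans (prefix_snoc_self w e he') hp⟩
      have hdisj : (↑Ew : Set G.E).PairwiseDisjoint (fun e => B.filter (fun b =>
          ∃ he : G.o e = w.1, IsPrefix G S ⟨G.t e, w.2.snoc e he⟩ b)) := by
        intro e1 h1' e2 h2' hne
        refine Finset.disjoint_left.mpr ?_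
        intro b hb1 hb2
        simp only [Finset.mem_filter] at hb1 hb2
        obtain ⟨-, he1, hp1⟩ := hb1
        obtain ⟨-, he2, hp2⟩ := hb2
        set s1 : WalkFrom G S := ⟨G.t e1, w.2.snoc e1 he1⟩ with hs1
        set s2 : WalkFrom G S := ⟨G.t e2, w.2.snoc e2 he2⟩ with hs2
        have hl1 : wlist s1.2 = wlist w.2 ++ [e1] := by
          obtain ⟨wv, ww⟩ := w; rfl
        have hl2 : wlist s2.2 = wlist w.2 ++ [e2] := by
          obtain ⟨wv, ww⟩ := w; rfl
        have hs : s1 = s2 := by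
          rcases isPrefix_comparable hp1 hp2 with h | h
          · exact eq_of_prefix_length h (by rw [hl1, hl2]; simp)
          · exact (eq_of_prefix_length h (by rw [hl1, hl2]; simp)).symm
        apply hne
        have : wlist s1.2 = wlist s2.2 := by rw [hs]
        rw [hl1, hl2] at this
        exact (append_singleton_inj this).2
      -- step 2 : apply the inductive hypothesis to each one-step extension
      have h2 : AddConGen.Rel (monoidRel G)
          (∑ e ∈ Ew, ({G.t e} : Multiset G.V))
          (∑ e ∈ Ew, ∑ b ∈ B.filter (fun b =>
            ∃ he : G.o e = w.1, IsPrefix G S ⟨G.t e, w.2.snoc e he⟩ b),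
              ({term b} : Multiset G.V)) := by
        apply rel_sum
        intro e heEw
        have he : G.o e = w.1 := by
          simpa [hEw] using heEw
        set we : WalkFrom G S := ⟨G.t e, w.2.snoc e he⟩ with hwe
        have hfe : B.filter (fun b =>
            ∃ he' : G.o e = w.1, IsPrefix G S ⟨G.t e, w.2.snoc e he'⟩ b) =
            B.filter (fun b => IsPrefix G S we b) := by
          apply Finset.filter_congr
          intro b _
          constructor
          · rintro ⟨he', hp⟩; exact hp
          · intro hp; exact ⟨he, hp⟩
        rw [hfe]
        have hlwe : (wlist we.2).length = (wlist w.2).length + 1 := by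
          obtain ⟨wv, ww⟩ := w; rw [hwe]; simp [wlist]
        have hlow' : ∀ b ∈ B, IsPrefix G S b we → b = we := by
          intro b hb hp
          have hl := prefix_wlist hp
          have : wlist we.2 = wlist w.2 ++ [e] := by
            obtain ⟨wv, ww⟩ := w; rfl
          rw [this] at hl
          rcases prefix_concat_cases hl with heq | hpre
          · exact eq_of_wlist_eq (by rw [heq, this])
          · exfalso
            have : IsPrefix G S b w := (isPrefix_iff b w).mpr hpre
            exact hwB ((hlow b hb this) ▸ hb)
        have hlen' : ∀ b ∈ B, IsPrefix G S we b →
            (wlist b.2).length ≤ (wlist we.2).length + n := by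
          intro b hb hp
          have := hlen b hb (isPrefix_trans (prefix_snoc_self w e he) hp)
          omega
        exact ih we hlow' hlen'
      rw [hpart, Finset.sum_biUnion hdisj]
      exact h1.trans h2

end Multigraph

/-- For any basis `B` of a cofinite inescapable subspace of `T(G,S)`,
`S = Σ_{p ∈ B} T(p)` in the graph monoid `M(G)`. -/
theorem statement14 (G : Multigraph) [Fintype G.V] [Fintype G.E]
    (S : G.V) (hS : IsRoot G S) (B : Finset (WalkFrom G S))
    (h : ∃ 𝒮 : Set (WalkFrom G S), IsSubspace G S 𝒮 ∧ Inescapable G S 𝒮 ∧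
      CofiniteSubspace G S 𝒮 ∧ IsBasis G S 𝒮 ↑B) :
    monoidEq G {S} (∑ p ∈ B, ({term p} : Multiset G.V)) := by
  classical
  obtain ⟨𝒮, -, hines, -, -, hanti0, hgen⟩ := h
  have hanti : ∀ b ∈ B, ∀ b' ∈ B, IsPrefix G S b b' → b = b' := by
    intro b hb b' hb' hp
    exact hanti0 b (Finset.mem_coe.mpr hb) b' (Finset.mem_coe.mpr hb') hp
  have hcomp : ∀ w : WalkFrom G S, ∃ b ∈ B, IsPrefix G S b w ∨ IsPrefix G S w b := by
    intro w
    obtain ⟨u, hu, hwu⟩ := hines w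
    obtain ⟨b, hb, hbu⟩ := hgen u hu
    exact ⟨b, Finset.mem_coe.mp hb, isPrefix_comparable hbu hwu⟩
  set n := B.sup (fun b => (wlist b.2).length) with hn
  have hmain := main_lemma B hanti hcomp n ⟨S, Walk.nil⟩ ?_ ?_
  · have hfil : B.filter (fun b => IsPrefix G S (⟨S, Walk.nil⟩ : WalkFrom G S) b) = B :=
      Finset.filter_true_of_mem (fun b _ => nil_isPrefix b)
    rw [hfil] at hmain
    exact hmain
  · intro b hb hp
    have h0 : wlist b.2 = [] := List.eq_nil_of_prefix_nil (prefix_wlist hp)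
    exact eq_of_wlist_eq (by rw [h0]; rfl)
  · intro b hb _
    have := Finset.le_sup (f := fun b : WalkFrom G S => (wlist b.2).length) hb
    simpa [wlist] using this
end

section
/- Let G be a multigraph and S, R two roots of G with S = R in the graph monoid M(G). Then there exist a finite basis B_S of a cofinite inescapable subspace of T(G, S), a finite basis B_R of a cofinite inescapable subspace of T(G, R), and a bijection π : B_S → B_R such that T(p) = T(π(p)) for every p ∈ B_S. -/
namespace Aux15

open Multigraph Relation

variable {G : Multigraph} {S : G.V}

/-! ### Walk prefix lemmas -/

def lenW (w : WalkFrom G S) : ℕ := w.2.length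

def initW : WalkFrom G S → Option (WalkFrom G S)
  | ⟨_, .nil⟩ => none
  | ⟨_, @Walk.snoc _ _ v u _ _⟩ => some ⟨v, u⟩

def lastE : WalkFrom G S → Option G.E
  | ⟨_, .nil⟩ => none
  | ⟨_, .snoc _ e _⟩ => some e

theorem isPrefix_trans {a b c : WalkFrom G S} (h1 : IsPrefix G S a b)
    (h2 : IsPrefix G S b c) : IsPrefix G S a c := by
  induction h2 with
  | refl => exact h1
  | snoc u e h _ ih => exact IsPrefix.snoc u e h ih

theorem nilWalk_isPrefix (w : WalkFrom G S) : IsPrefix G S (nilWalk G S) w := by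
  obtain ⟨v, wk⟩ := w
  induction wk with
  | nil => exact IsPrefix.refl _
  | snoc u e h ih => exact IsPrefix.snoc _ e h ih

theorem lenW_le_of_isPrefix {a b : WalkFrom G S} (h : IsPrefix G S a b) :
    lenW a ≤ lenW b := by
  induction h with
  | refl => exact le_rfl
  | snoc u e h _ ih => exact ih.trans (Nat.le_succ _)

theorem snoc_ne (x : WalkFrom G S) (e : G.E) (h : G.o e = x.1) :
    (⟨G.t e, x.2.snoc e h⟩ : WalkFrom G S) ≠ x := by
  intro hEq
  have h2 := congrArg lenW hEq
  simp only [lenW, Walk.length] at h2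
  omega

theorem isPrefix_snoc_self (b : WalkFrom G S) (e : G.E) (h : G.o e = b.1) :
    IsPrefix G S b ⟨G.t e, b.2.snoc e h⟩ :=
  IsPrefix.snoc b.2 e h (IsPrefix.refl b)

theorem isPrefix_inv {b y : WalkFrom G S} (hp : IsPrefix G S b y) :
    b = y ∨ ∃ (x : WalkFrom G S) (e : G.E) (h : G.o e = x.1),
      y = ⟨G.t e, x.2.snoc e h⟩ ∧ IsPrefix G S b x := by
  cases hp with
  | refl => exact Or.inl rfl
  | snoc u e h hp' => exact Or.inr ⟨⟨_, u⟩, e, h, rfl, hp'⟩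

theorem isPrefix_snoc_elim {b x : WalkFrom G S} {e : G.E} {h : G.o e = x.1}
    (hp : IsPrefix G S b ⟨G.t e, x.2.snoc e h⟩) :
    b = (⟨G.t e, x.2.snoc e h⟩ : WalkFrom G S) ∨ IsPrefix G S b x := by
  rcases isPrefix_inv hp with h1 | ⟨x', e', h', hy, hp'⟩
  · exact Or.inl h1
  · have hx : x' = x := by
      have h2 := congrArg initW hy
      simp only [initW] at h2
      exact (Option.some.inj h2).symm
    subst hx
    exact Or.inr hp'

theorem isPrefix_snoc_of_ne {b w : WalkFrom G S} (hp : IsPrefix G S b w) (hne : b ≠ w) :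
    ∃ (e : G.E) (h : G.o e = b.1), IsPrefix G S ⟨G.t e, b.2.snoc e h⟩ w := by
  induction hp with
  | refl => exact absurd rfl hne
  | @snoc v u e h hprem ih =>
    by_cases hb : b = (⟨v, u⟩ : WalkFrom G S)
    · subst hb
      exact ⟨e, h, IsPrefix.refl _⟩
    · obtain ⟨e', h', hp''⟩ := ih hb
      exact ⟨e', h', IsPrefix.snoc u e h hp''⟩

/-! ### The multiset rewriting system -/

section StepSec

variable (G) [Fintype G.E]

open scoped Classical

def StepRel : Multiset G.V → Multiset G.V → Prop :=
  fun s u => ∃ (v : G.V) (t : Multiset G.V),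
    (∃ e, G.o e = v) ∧ s = v ::ₘ t ∧ u = outSum G v + t

theorem outSum_eq_map (v : G.V) :
    outSum G v = (Finset.univ.filter (fun e => G.o e = v)).val.map G.t := by
  unfold outSum
  rw [Finset.sum_eq_multiset_sum]
  rw [show (fun e => ({G.t e} : Multiset G.V)) = (fun a => ({a} : Multiset G.V)) ∘ G.t from rfl,
    ← Multiset.map_map, Multiset.sum_map_singleton]

theorem stepRel_add {s u : Multiset G.V} (t : Multiset G.V) (h : StepRel G s u) :
    StepRel G (s + t) (u + t) := by
  obtain ⟨v, t', hv, rfl, rfl⟩ := h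
  exact ⟨v, t' + t, hv, by rw [Multiset.cons_add], by rw [add_assoc]⟩

theorem steps_add {s u : Multiset G.V} (t : Multiset G.V)
    (h : ReflTransGen (StepRel G) s u) :
    ReflTransGen (StepRel G) (s + t) (u + t) := by
  induction h with
  | refl => exact .refl
  | tail _ h2 ih => exact ih.tail (stepRel_add G t h2)

theorem steps_add_left {s u : Multiset G.V} (t : Multiset G.V)
    (h : ReflTransGen (StepRel G) s u) :
    ReflTransGen (StepRel G) (t + s) (t + u) := by
  have h2 := steps_add G t h
  rwa [add_comm s t, add_comm u t] at h2

theorem stepRel_diamond : ∀ a b c, StepRel G a b → StepRel G a c →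
    ∃ d, ReflGen (StepRel G) b d ∧ ReflTransGen (StepRel G) c d := by
  rintro a b c ⟨v1, t1, hv1, rfl, rfl⟩ ⟨v2, t2, hv2, h1, rfl⟩
  rcases Multiset.cons_eq_cons.mp h1 with ⟨rfl, rfl⟩ | ⟨hne, cs, rfl, rfl⟩
  · exact ⟨outSum G v1 + t1, .refl, .refl⟩
  · refine ⟨outSum G v1 + (outSum G v2 + cs), ReflGen.single ?_, ReflTransGen.single ?_⟩
    · refine ⟨v2, outSum G v1 + cs, hv2, by rw [Multiset.add_cons], ?_⟩
      rw [add_left_comm]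
    · exact ⟨v1, outSum G v2 + cs, hv1, by rw [Multiset.add_cons], rfl⟩

def joinCon : AddCon (Multiset G.V) where
  r := Relation.Join (ReflTransGen (StepRel G))
  iseqv := Relation.equivalence_join_reflTransGen (stepRel_diamond G)
  add' := by
    rintro a b c d ⟨x, hax, hbx⟩ ⟨y, hcy, hdy⟩
    exact ⟨x + y, (steps_add G c hax).trans (steps_add_left G x hcy),
      (steps_add G d hbx).trans (steps_add_left G x hdy)⟩

theorem monoidEq_join {s u : Multiset G.V} (h : monoidEq G s u) :
    Relation.Join (ReflTransGen (StepRel G)) s u := by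
  have hle : addConGen (monoidRel G) ≤ joinCon G := by
    apply AddCon.addConGen_le.mpr
    rintro x y ⟨v, hv, rfl, rfl⟩
    exact ⟨outSum G v, ReflTransGen.single ⟨v, 0, hv, by simp, by simp⟩, .refl⟩
  exact hle h

end StepSec

/-! ### Good families of walks -/

def GoodFam (B : Multiset (WalkFrom G S)) : Prop :=
  B.Nodup ∧ (∀ b ∈ B, ∀ b' ∈ B, IsPrefix G S b b' → b = b') ∧
    (∀ w : WalkFrom G S, ∃ b ∈ B, IsPrefix G S b w ∨ IsPrefix G S w b)

theorem goodFam_nil : GoodFam ({nilWalk G S} : Multiset (WalkFrom G S)) := by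
  refine ⟨Multiset.nodup_singleton _, ?_, ?_⟩
  · intro b hb b' hb' _
    rw [Multiset.mem_singleton] at hb hb'
    rw [hb, hb']
  · intro w
    exact ⟨nilWalk G S, Multiset.mem_singleton_self _, Or.inl (nilWalk_isPrefix w)⟩

section ExtSec

variable [Fintype G.E]

open scoped Classical

noncomputable def extFam (b : WalkFrom G S) : Multiset (WalkFrom G S) :=
  (Finset.univ.filter (fun e => G.o e = b.1)).val.attach.map
    (fun e => ⟨G.t e.1, b.2.snoc e.1 (by
      have h2 := e.2
      rw [Finset.mem_val, Finset.mem_filter] at h2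
      exact h2.2)⟩)

theorem mem_extFam {b x : WalkFrom G S} :
    x ∈ extFam b ↔ ∃ (e : G.E) (h : G.o e = b.1), x = ⟨G.t e, b.2.snoc e h⟩ := by
  constructor
  · intro hx
    rw [extFam, Multiset.mem_map] at hx
    obtain ⟨e, _, rfl⟩ := hx
    have h2 := e.2
    rw [Finset.mem_val, Finset.mem_filter] at h2
    exact ⟨e.1, h2.2, rfl⟩
  · rintro ⟨e, h, rfl⟩
    rw [extFam, Multiset.mem_map]
    refine ⟨⟨e, ?_⟩, Multiset.mem_attach _ _, rfl⟩
    rw [Finset.mem_val, Finset.mem_filter]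
    exact ⟨Finset.mem_univ _, h⟩

theorem extFam_map_term (b : WalkFrom G S) : (extFam b).map term = outSum G b.1 := by
  rw [extFam, Multiset.map_map, outSum_eq_map]
  exact Multiset.attach_map_val' _ _

theorem extFam_nodup (b : WalkFrom G S) : (extFam b).Nodup := by
  rw [extFam]
  refine Multiset.Nodup.map_on ?_ (Multiset.nodup_attach.mpr (Finset.univ.filter _).nodup)
  intro e1 _ e2 _ hEq
  have h2 := congrArg lastE hEq
  simp only [lastE] at h2
  exact Subtype.ext (Option.some.inj h2)

theorem extFam_nonempty {b : WalkFrom G S} (hv : ∃ e, G.o e = b.1) :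
    ∃ x, x ∈ extFam b := by
  obtain ⟨e, he⟩ := hv
  exact ⟨_, mem_extFam.mpr ⟨e, he, rfl⟩⟩

theorem goodFam_step {B : Multiset (WalkFrom G S)} (hB : GoodFam B)
    {m m' : Multiset G.V} (hmap : B.map term = m) (hstep : StepRel G m m') :
    ∃ B' : Multiset (WalkFrom G S), GoodFam B' ∧ B'.map term = m' := by
  obtain ⟨v, t, hv, rfl, rfl⟩ := hstep
  obtain ⟨b, hbB, hbv, hB₀⟩ := (Multiset.map_eq_cons term B t v).mpr hmap
  set B₀ := B.erase b with hB₀def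
  have hcons : B = b ::ₘ B₀ := (Multiset.cons_erase hbB).symm
  have hbnot : b ∉ B₀ := by
    have h2 := hB.1
    rw [hcons, Multiset.nodup_cons] at h2
    exact h2.1
  have hB₀nodup : B₀.Nodup := by
    have h2 := hB.1
    rw [hcons, Multiset.nodup_cons] at h2
    exact h2.2
  have hvb : ∃ e, G.o e = b.1 := by rw [show b.1 = term b from rfl, hbv]; exact hv
  refine ⟨extFam b + B₀, ⟨?_, ?_, ?_⟩, ?_⟩
  · rw [Multiset.nodup_add]
    refine ⟨extFam_nodup b, hB₀nodup, ?_⟩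
    rw [Multiset.disjoint_left]
    intro x hx hx₀
    obtain ⟨e, he, rfl⟩ := mem_extFam.mp hx
    have hxB : (⟨G.t e, b.2.snoc e he⟩ : WalkFrom G S) ∈ B := by
      rw [hcons]; exact Multiset.mem_cons_of_mem hx₀
    have := hB.2.1 b hbB _ hxB (isPrefix_snoc_self b e he)
    exact snoc_ne b e he this.symm
  · intro x hx y hy hp
    rw [Multiset.mem_add] at hx hy
    rcases hx with hx | hx <;> rcases hy with hy | hy
    · obtain ⟨e1, he1, rfl⟩ := mem_extFam.mp hx
      obtain ⟨e2, he2, rfl⟩ := mem_extFam.mp hy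
      rcases isPrefix_snoc_elim hp with h1 | h1
      · exact h1
      · exfalso
        have := lenW_le_of_isPrefix h1
        simp only [lenW, Walk.length] at this
        omega
    · exfalso
      obtain ⟨e1, he1, rfl⟩ := mem_extFam.mp hx
      have hby : IsPrefix G S b y :=
        isPrefix_trans (isPrefix_snoc_self b e1 he1) hp
      have hyB : y ∈ B := by rw [hcons]; exact Multiset.mem_cons_of_mem hy
      have := hB.2.1 b hbB y hyB hby
      rw [← this] at hy
      exact hbnot hy
    · obtain ⟨e2, he2, rfl⟩ := mem_extFam.mp hy
      rcases isPrefix_snoc_elim hp with h1 | h1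
      · exact h1
      · exfalso
        have hxB : x ∈ B := by rw [hcons]; exact Multiset.mem_cons_of_mem hx
        have := hB.2.1 x hxB b hbB h1
        rw [this] at hx
        exact hbnot hx
    · have hxB : x ∈ B := by rw [hcons]; exact Multiset.mem_cons_of_mem hx
      have hyB : y ∈ B := by rw [hcons]; exact Multiset.mem_cons_of_mem hy
      exact hB.2.1 x hxB y hyB hp
  · intro w
    obtain ⟨c, hc, hcomp⟩ := hB.2.2 w
    rw [hcons, Multiset.mem_cons] at hc
    rcases hc with rfl | hc
    · rcases hcomp with hcw | hwc
      · by_cases hbw : c = w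
        · obtain ⟨x, hx⟩ := extFam_nonempty hvb
          obtain ⟨e, he, rfl⟩ := mem_extFam.mp hx
          refine ⟨_, Multiset.mem_add.mpr (Or.inl hx), Or.inr ?_⟩
          rw [← hbw]
          exact isPrefix_snoc_self c e he
        · obtain ⟨e, he, hp⟩ := isPrefix_snoc_of_ne hcw hbw
          refine ⟨⟨G.t e, c.2.snoc e he⟩,
            Multiset.mem_add.mpr (Or.inl (mem_extFam.mpr ⟨e, he, rfl⟩)), Or.inl hp⟩
      · obtain ⟨x, hx⟩ := extFam_nonempty hvb
        obtain ⟨e, he, rfl⟩ := mem_extFam.mp hx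
        exact ⟨_, Multiset.mem_add.mpr (Or.inl hx),
          Or.inr (isPrefix_trans hwc (isPrefix_snoc_self c e he))⟩
    · exact ⟨c, Multiset.mem_add.mpr (Or.inr hc), hcomp⟩
  · rw [Multiset.map_add, extFam_map_term, hB₀,
      show b.1 = term b from rfl, hbv]

theorem exists_goodFam {m : Multiset G.V}
    (h : ReflTransGen (StepRel G) {S} m) :
    ∃ B : Multiset (WalkFrom G S), GoodFam B ∧ B.map term = m := by
  induction h with
  | refl => exact ⟨{nilWalk G S}, goodFam_nil, by simp [term, nilWalk]⟩
  | tail _ h2 ih =>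
    obtain ⟨B, hB, hmap⟩ := ih
    exact goodFam_step hB hmap h2

end ExtSec

/-! ### From a good family to a basis -/

theorem goodFam_basis (BS : Finset (WalkFrom G S)) (hB : GoodFam BS.val) :
    ∃ 𝒮 : Set (WalkFrom G S), IsSubspace G S 𝒮 ∧ Inescapable G S 𝒮 ∧
      CofiniteSubspace G S 𝒮 ∧ IsBasis G S 𝒮 ↑BS := by
  refine ⟨{u | ∃ x ∈ (BS : Set (WalkFrom G S)), IsPrefix G S x u}, ?_, ?_, ?_, ?_, ?_, ?_⟩
  · rintro w ⟨x, hx, hp⟩ w' hp'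
    exact ⟨x, hx, isPrefix_trans hp hp'⟩
  · intro w
    obtain ⟨b, hb, hcomp⟩ := hB.2.2 w
    have hbset : b ∈ (BS : Set (WalkFrom G S)) := hb
    rcases hcomp with hbw | hwb
    · exact ⟨w, ⟨b, hbset, hbw⟩, IsPrefix.refl w⟩
    · exact ⟨b, ⟨b, hbset, IsPrefix.refl b⟩, hwb⟩
  · exact ⟨↑BS, BS.finite_toSet, rfl⟩
  · intro b hb
    exact ⟨b, hb, IsPrefix.refl b⟩
  · intro b hb b' hb' hp
    exact hB.2.1 b hb b' hb' hp
  · rintro w ⟨x, hx, hp⟩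
    exact ⟨x, hx, hp⟩

/-! ### Bijection from equal multiset images -/

theorem exists_term_equiv {α β γ : Type*} (f : α → γ) (g : β → γ) :
    ∀ (n : ℕ) (A : Finset α) (B : Finset β), A.card = n →
      A.val.map f = B.val.map g →
      ∃ e : {a // a ∈ A} ≃ {b // b ∈ B}, ∀ a, g (e a).1 = f a.1 := by
  classical
  intro n
  induction n with
  | zero =>
    intro A B hcard h
    have hA : A = ∅ := Finset.card_eq_zero.mp hcard
    subst hA
    have hB : B = ∅ := by
      have h2 : B.val.map g = 0 := by simpa using h.symm
      rw [Multiset.map_eq_zero] at h2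
      exact Finset.val_eq_zero.mp h2
    subst hB
    haveI : IsEmpty {a // a ∈ (∅ : Finset α)} :=
      ⟨fun x => absurd x.2 (Finset.notMem_empty _)⟩
    haveI : IsEmpty {b // b ∈ (∅ : Finset β)} :=
      ⟨fun x => absurd x.2 (Finset.notMem_empty _)⟩
    exact ⟨Equiv.equivOfIsEmpty _ _, fun a => absurd a.2 (Finset.notMem_empty _)⟩
  | succ n ih =>
    intro A B hcard h
    obtain ⟨a, ha⟩ : A.Nonempty := Finset.card_pos.mp (by omega)
    have hfa : f a ∈ B.val.map g := by
      rw [← h]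
      exact Multiset.mem_map_of_mem f ha
    obtain ⟨b, hb, hgb⟩ := Multiset.mem_map.mp hfa
    have hbB : b ∈ B := hb
    have hAval : A.val = a ::ₘ (A.erase a).val := by
      rw [Finset.erase_val]
      exact (Multiset.cons_erase ha).symm
    have hBval : B.val = b ::ₘ (B.erase b).val := by
      rw [Finset.erase_val]
      exact (Multiset.cons_erase hb).symm
    have h' : (A.erase a).val.map f = (B.erase b).val.map g := by
      rw [hAval, hBval, Multiset.map_cons, Multiset.map_cons, hgb] at h
      exact (Multiset.cons_inj_right _).mp h
    have hcard' : (A.erase a).card = n := by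
      rw [Finset.card_erase_of_mem ha, hcard]
      omega

    obtain ⟨e', he'⟩ := ih (A.erase a) (B.erase b) hcard' h'
    refine ⟨⟨fun x => if hx : x.1 = a then ⟨b, hbB⟩ else
        ⟨(e' ⟨x.1, Finset.mem_erase.mpr ⟨hx, x.2⟩⟩).1,
          Finset.mem_of_mem_erase (e' ⟨x.1, Finset.mem_erase.mpr ⟨hx, x.2⟩⟩).2⟩,
      fun y => if hy : y.1 = b then ⟨a, ha⟩ else
        ⟨(e'.symm ⟨y.1, Finset.mem_erase.mpr ⟨hy, y.2⟩⟩).1,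
          Finset.mem_of_mem_erase (e'.symm ⟨y.1, Finset.mem_erase.mpr ⟨hy, y.2⟩⟩).2⟩,
      ?_, ?_⟩, ?_⟩
    · intro x
      by_cases hx : x.1 = a
      · simp only [hx, dif_pos]
        exact Subtype.ext hx.symm
      · simp only [dif_neg hx]
        have hne : (e' ⟨x.1, Finset.mem_erase.mpr ⟨hx, x.2⟩⟩).1 ≠ b :=
          Finset.ne_of_mem_erase (e' ⟨x.1, Finset.mem_erase.mpr ⟨hx, x.2⟩⟩).2
        simp only [dif_neg hne]
        refine Subtype.ext ?_
        show (e'.symm ⟨(e' ⟨x.1, Finset.mem_erase.mpr ⟨hx, x.2⟩⟩).1, _⟩).1 = x.1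
        have hsub : (⟨(e' ⟨x.1, Finset.mem_erase.mpr ⟨hx, x.2⟩⟩).1, by
            exact Finset.mem_erase.mpr ⟨hne, Finset.mem_of_mem_erase
              (e' ⟨x.1, Finset.mem_erase.mpr ⟨hx, x.2⟩⟩).2⟩⟩ :
            {y // y ∈ B.erase b}) = e' ⟨x.1, Finset.mem_erase.mpr ⟨hx, x.2⟩⟩ :=
          Subtype.ext rfl
        rw [hsub, Equiv.symm_apply_apply]
    · intro y
      by_cases hy : y.1 = b
      · simp only [hy, dif_pos]
        exact Subtype.ext hy.symm
      · simp only [dif_neg hy]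
        have hne : (e'.symm ⟨y.1, Finset.mem_erase.mpr ⟨hy, y.2⟩⟩).1 ≠ a :=
          Finset.ne_of_mem_erase (e'.symm ⟨y.1, Finset.mem_erase.mpr ⟨hy, y.2⟩⟩).2
        simp only [dif_neg hne]
        refine Subtype.ext ?_
        show (e' ⟨(e'.symm ⟨y.1, Finset.mem_erase.mpr ⟨hy, y.2⟩⟩).1, _⟩).1 = y.1
        have hsub : (⟨(e'.symm ⟨y.1, Finset.mem_erase.mpr ⟨hy, y.2⟩⟩).1, by
            exact Finset.mem_erase.mpr ⟨hne, Finset.mem_of_mem_erase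
              (e'.symm ⟨y.1, Finset.mem_erase.mpr ⟨hy, y.2⟩⟩).2⟩⟩ :
            {x // x ∈ A.erase a}) = e'.symm ⟨y.1, Finset.mem_erase.mpr ⟨hy, y.2⟩⟩ :=
          Subtype.ext rfl
        rw [hsub, Equiv.apply_symm_apply]
    · intro x
      by_cases hx : x.1 = a
      · simp only [Equiv.coe_fn_mk, hx, dif_pos]
        rw [hgb]
      · simp only [Equiv.coe_fn_mk, dif_neg hx]
        exact he' ⟨x.1, Finset.mem_erase.mpr ⟨hx, x.2⟩⟩

end Aux15

open Multigraph Aux15 Relation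

/-- If two roots `S`, `R` are equal in the graph monoid, there are finite
bases of cofinite inescapable subspaces of `T(G,S)` and `T(G,R)` in terminus-preserving
bijection. -/
theorem statement15 (G : Multigraph) [Fintype G.E]
    (S R : G.V) (hS : IsRoot G S) (hR : IsRoot G R)
    (h : monoidEq G {S} {R}) :
    ∃ (BS : Finset (WalkFrom G S)) (BR : Finset (WalkFrom G R)),
      (∃ 𝒮 : Set (WalkFrom G S), IsSubspace G S 𝒮 ∧ Inescapable G S 𝒮 ∧
        CofiniteSubspace G S 𝒮 ∧ IsBasis G S 𝒮 ↑BS) ∧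
      (∃ 𝒮 : Set (WalkFrom G R), IsSubspace G R 𝒮 ∧ Inescapable G R 𝒮 ∧
        CofiniteSubspace G R 𝒮 ∧ IsBasis G R 𝒮 ↑BR) ∧
      ∃ π : {p // p ∈ BS} ≃ {q // q ∈ BR},
        ∀ p : {p // p ∈ BS}, term p.1 = term (π p).1 := by
  classical
  obtain ⟨m, hSm, hRm⟩ := monoidEq_join G h
  obtain ⟨BS', hBS, hmS⟩ := exists_goodFam hSm
  obtain ⟨BR', hBR, hmR⟩ := exists_goodFam hRm
  refine ⟨⟨BS', hBS.1⟩, ⟨BR', hBR.1⟩, goodFam_basis _ hBS, goodFam_basis _ hBR, ?_⟩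
  obtain ⟨e, he⟩ := exists_term_equiv (term (G := G) (S := S)) (term (G := G) (S := R))
    (⟨BS', hBS.1⟩ : Finset (WalkFrom G S)).card ⟨BS', hBS.1⟩ ⟨BR', hBR.1⟩ rfl
    (hmS.trans hmR.symm)
  exact ⟨e, fun p => (he p).symm⟩
end
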